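/- Let A be a factorial domain and G ⊆ Aut(A) finite with R = A^G. For every χ ∈ Z^1(G,U(A)): (i) overline{A_χA} = d_χA where d_χ = gcd(A_χ) ∈ A_{μ_χ} is a semi-invariant for a cocycle μ_χ ∈ Z^1(G,U(A)) whose class [μ_χ] ∈ H^1(G,U(A)) is uniquely determined; (ii) the divisor class cl(A_χ) ∈ C_R of the reflexive rank-one R-module A_χ equals [χ^{-1}μ_χ] ∈ H̃ under the isomorphism C_R ≅ H̃; (iii) A_χ is a free R-module if and only if [χ] = [μ_χ] in H^1(G,U(A)). -/

import Mathlib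

open scoped Classical Pointwise

set_option maxHeartbeats 1000000
set_option synthInstance.maxHeartbeats 400000

namespace QGor

variable {A : Type*} [CommRing A]

/-- The divisorial closure of an ideal: the intersection of all principal ideals containing it. -/
def divClosure (J : Ideal A) : Ideal A :=
  sInf {I : Ideal A | (∃ a : A, I = Ideal.span {a}) ∧ J ≤ I}

/-- `d` is a greatest common divisor of the set `X`. -/
def IsGCDOf (d : A) (X : Set A) : Prop :=
  (∀ x ∈ X, d ∣ x) ∧ ∀ c : A, (∀ x ∈ X, c ∣ x) → c ∣ d

/-- A height one prime ideal: a nonzero prime which is minimal over `⊥`. -/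
structure IsHeightOnePrime (P : Ideal A) : Prop where
  isPrime : P.IsPrime
  ne_bot : P ≠ ⊥
  height_one : ∀ Q : Ideal A, Q.IsPrime → Q < P → Q = ⊥

/-- A Krull domain: localizations at height one primes are discrete valuation rings, `A` is
the intersection of these localizations inside its quotient field, and every nonzero element
lies in only finitely many height one primes. -/
def IsKrullDomain (A : Type*) [CommRing A] [IsDomain A] : Prop :=
  (∀ P : Ideal A, ∀ hP : IsHeightOnePrime P,
     haveI := hP.isPrime
     IsDiscreteValuationRing (Localization.AtPrime P)) ∧
  (∀ x : FractionRing A,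
      (∀ P : Ideal A, IsHeightOnePrime P →
        ∃ s a : A, s ∉ P ∧ algebraMap A (FractionRing A) s * x = algebraMap A (FractionRing A) a) →
      ∃ a : A, x = algebraMap A (FractionRing A) a) ∧
  (∀ a : A, a ≠ 0 → {P : Ideal A | IsHeightOnePrime P ∧ a ∈ P}.Finite)


variable (G : Type*) [Group G] [MulSemiringAction G A]

/-- A 1-cocycle of `G` with values in the unit group of `A`. -/
def IsCocycle (χ : G → Aˣ) : Prop :=
  ∀ g h : G, (χ (g * h) : A) = (χ g : A) * g • ((χ h : A))

/-- Two 1-cocycles are cohomologous, i.e. differ by the coboundary of a unit `u`. -/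
def Cohomologous (χ μ : G → Aˣ) : Prop :=
  ∃ u : Aˣ, ∀ g : G, (μ g : A) = (χ g : A) * (((u⁻¹ : Aˣ) : A) * g • (u : A))

/-- The set of relative invariants (semi-invariants) of a cocycle `χ`. -/
def semiInv (χ : G → Aˣ) : Set A := {a : A | ∀ g : G, g • a = (χ g : A) * a}

/-- The ring of invariants `A^G`. -/
def fixedSubring : Subring A where
  carrier := {a : A | ∀ g : G, g • a = a}
  mul_mem' := by intro a b ha hb g; rw [smul_mul', ha g, hb g]
  one_mem' := fun g => smul_one g
  add_mem' := by intro a b ha hb g; rw [smul_add, ha g, hb g]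
  zero_mem' := fun g => smul_zero g
  neg_mem' := by intro a ha g; rw [smul_neg, ha g]

/-- The module of semi-invariants `A_χ`, as a module over the ring of invariants. -/
def semiInvModule (χ : G → Aˣ) : Submodule ↥(fixedSubring (A := A) G) A where
  carrier := semiInv G χ
  add_mem' := by intro a b ha hb g; rw [smul_add, ha g, hb g, mul_add]
  zero_mem' := by intro g; rw [smul_zero, mul_zero]
  smul_mem' := by
    intro r a ha g
    have hra : r • a = (r : A) * a := rfl
    rw [hra, smul_mul', r.2 g, ha g, mul_left_comm]


section Aux

section UFD
variable [IsDomain A] [UniqueFactorizationMonoid A]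

open UniqueFactorizationMonoid

theorem exists_isGCDOf (X : Set A) : ∃ d : A, IsGCDOf d X := by
  classical
  letI : NormalizationMonoid A := UniqueFactorizationMonoid.normalizationMonoid.toNormalizationMonoid
  letI : GCDMonoid A := (UniqueFactorizationMonoid.toNormalizedGCDMonoid A).toGCDMonoid
  by_cases h0 : ∀ x ∈ X, x = (0 : A)
  · exact ⟨0, fun x hx => (h0 x hx) ▸ dvd_rfl, fun c _ => dvd_zero c⟩
  push_neg at h0
  obtain ⟨x₀, hx₀X, hx₀⟩ := h0
  set S : Set A := {e : A | ∀ x ∈ X, e ∣ x} with hS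
  have h1S : (1 : A) ∈ S := fun x _ => one_dvd x
  have hSne : ∀ e ∈ S, e ≠ 0 := by
    intro e he h
    exact hx₀ (zero_dvd_iff.mp (h ▸ he x₀ hx₀X))
  have hcard : ∀ e ∈ S, Multiset.card (normalizedFactors e) ≤
      Multiset.card (normalizedFactors x₀) := by
    intro e he
    exact Multiset.card_le_card
      ((dvd_iff_normalizedFactors_le_normalizedFactors (hSne e he) hx₀).mp (he x₀ hx₀X))
  set T : Set ℕ := (fun e => Multiset.card (normalizedFactors e)) '' S with hT
  have hTne : T.Nonempty := ⟨_, ⟨1, h1S, rfl⟩⟩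
  have hTbd : ∀ n ∈ T, n ≤ Multiset.card (normalizedFactors x₀) := by
    rintro n ⟨e, he, rfl⟩; exact hcard e he
  have hTfin : T.Finite := Set.Finite.subset
      (Set.finite_Icc 0 (Multiset.card (normalizedFactors x₀)))
      (fun n hn => Set.mem_Icc.mpr ⟨Nat.zero_le n, hTbd n hn⟩)
  obtain ⟨n, hnT, hnmax⟩ := Set.exists_max_image T id hTfin hTne
  obtain ⟨d, hdS, hdn⟩ := hnT
  refine ⟨d, hdS, ?_⟩
  intro c hc
  have hcS : c ∈ S := hc
  have hl : lcm c d ∈ S := fun x hx => lcm_dvd (hc x hx) (hdS x hx)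
  have hld : d ∣ lcm c d := dvd_lcm_right c d
  have hlne : lcm c d ≠ 0 := hSne _ hl
  have hdne : d ≠ 0 := hSne d hdS
  have h1 : Multiset.card (normalizedFactors (lcm c d)) ≤ Multiset.card (normalizedFactors d) := by
    have := hnmax _ ⟨lcm c d, hl, rfl⟩
    simpa [hdn] using this
  obtain ⟨k, hk⟩ := hld
  have hkne : k ≠ 0 := by rintro rfl; rw [mul_zero] at hk; exact hlne hk
  have hfac : normalizedFactors (lcm c d) = normalizedFactors d + normalizedFactors k := by
    rw [hk, normalizedFactors_mul hdne hkne]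
  have hkcard : Multiset.card (normalizedFactors k) = 0 := by
    have := h1
    rw [hfac, Multiset.card_add] at this
    omega
  have hkunit : IsUnit k := by
    have h := prod_normalizedFactors hkne
    rw [Multiset.card_eq_zero.mp hkcard] at h
    simpa using (associated_one_iff_isUnit.mp h.symm)
  obtain ⟨u, rfl⟩ := hkunit
  have : lcm c d ∣ d := by rw [hk]; exact (Units.mul_right_dvd).mpr dvd_rfl
  exact dvd_trans (dvd_lcm_left c d) this

theorem isGCDOf_mul_left {d : A} {X : Set A} (hd : IsGCDOf d X) (a : A) (ha : a ≠ 0) :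
    IsGCDOf (a * d) ((a * ·) '' X) := by
  classical
  letI : NormalizationMonoid A := UniqueFactorizationMonoid.normalizationMonoid.toNormalizationMonoid
  letI : GCDMonoid A := (UniqueFactorizationMonoid.toNormalizedGCDMonoid A).toGCDMonoid
  by_cases hd0 : d = 0
  · subst hd0
    have hX : ∀ x ∈ X, x = (0:A) := fun x hx => zero_dvd_iff.mp (hd.1 x hx)
    constructor
    · rintro y ⟨x, hx, rfl⟩; rw [hX x hx]
    · intro c _; rw [mul_zero]; exact dvd_zero c
  constructor
  · rintro y ⟨x, hx, rfl⟩
    exact mul_dvd_mul_left a (hd.1 x hx)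
  · intro c hc
    have hcax : ∀ x ∈ X, c ∣ a * x := fun x hx => hc _ ⟨x, hx, rfl⟩
    have had : a * d ∣ lcm c (a * d) := dvd_lcm_right _ _
    obtain ⟨t, ht⟩ := had
    have hlx : ∀ x ∈ X, lcm c (a * d) ∣ a * x := fun x hx =>
      lcm_dvd (hcax x hx) (mul_dvd_mul_left a (hd.1 x hx))
    have hdt : ∀ x ∈ X, d * t ∣ x := by
      intro x hx
      obtain ⟨k, hk⟩ := hlx x hx
      refine ⟨k, ?_⟩
      apply mul_left_cancel₀ ha
      rw [hk, ht]; ring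
    have h1 : d * t ∣ d := hd.2 _ hdt
    obtain ⟨k, hk⟩ := h1
    have htk : t * k = 1 := by
      apply mul_left_cancel₀ hd0
      rw [← mul_assoc, ← hk, mul_one]
    have hc2 : c ∣ a * d * t := ht ▸ dvd_lcm_left _ _
    have hu : IsUnit t := IsUnit.of_mul_eq_one k htk
    exact hc2.trans ((hu.mul_right_dvd).mpr dvd_rfl)

end UFD

omit [CommRing A] in
theorem divClosure_eq_of_isGCDOf' {A : Type*} [CommRing A] {d : A} {X : Set A}
    (hd : IsGCDOf d X) :
    divClosure (Ideal.span X) = Ideal.span {d} := by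
  apply le_antisymm
  · apply sInf_le
    refine ⟨⟨d, rfl⟩, ?_⟩
    rw [Ideal.span_le]
    intro x hx
    exact Ideal.mem_span_singleton.mpr (hd.1 x hx)
  · apply le_sInf
    rintro I ⟨⟨b, rfl⟩, hI⟩
    rw [Ideal.span_le] at hI ⊢
    intro x hx
    rw [Set.mem_singleton_iff] at hx
    subst hx
    refine Ideal.mem_span_singleton.mpr (hd.2 b ?_)
    intro x hx
    exact Ideal.mem_span_singleton.mp (hI hx)

section Act
variable {G : Type*} [Group G] [MulSemiringAction G A]

theorem smul_dvd' {x y : A} (g : G) (h : x ∣ y) : g • x ∣ g • y := by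
  obtain ⟨k, rfl⟩ := h
  exact ⟨g • k, by rw [smul_mul']⟩

/-- Hilbert 90 style nonvanishing: there is a nonzero semi-invariant for every cocycle. -/
theorem exists_nonzero_semiInv [IsDomain A] [Finite G] [FaithfulSMul G A]
    (χ : G → Aˣ) (hχ : IsCocycle G χ) : ∃ b : A, b ≠ 0 ∧ b ∈ semiInv G χ := by
  classical
  haveI := Fintype.ofFinite G
  set K := FractionRing A
  have hKinj : Function.Injective (algebraMap A K) := IsFractionRing.injective A K
  set ψ : G → (A →* K) := fun g =>
    (algebraMap A K).toMonoidHom.comp (MulSemiringAction.toRingHom G A g).toMonoidHom with hψ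
  have hψinj : Function.Injective ψ := by
    intro g g' h
    apply FaithfulSMul.eq_of_smul_eq_smul (α := A)
    intro a
    have := DFunLike.congr_fun h a
    exact hKinj this
  have li : LinearIndependent K (fun g : G => (ψ g : A → K)) :=
    (linearIndependent_monoidHom A K).comp ψ hψinj
  have hinv : ∀ (h g : G), h • ((((χ g)⁻¹ : Aˣ) : A)) = (χ h : A) * (((χ (h * g))⁻¹ : Aˣ) : A) := by
    intro h g
    have hne : h • ((χ g : A)) ≠ 0 := by
      intro h0
      have : h • (((χ g)⁻¹ : Aˣ) : A) * (h • ((χ g : A))) = 1 := by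
        rw [← smul_mul', Units.inv_mul, smul_one]
      rw [h0, mul_zero] at this
      exact zero_ne_one this
    apply mul_right_cancel₀ hne
    have h1 : h • (((χ g)⁻¹ : Aˣ) : A) * h • ((χ g : A)) = 1 := by
      rw [← smul_mul', Units.inv_mul, smul_one]
    rw [h1]
    have h2 : (χ (h * g) : A) = (χ h : A) * h • ((χ g : A)) := hχ h g
    calc (1 : A) = (((χ (h*g))⁻¹ : Aˣ) : A) * (χ (h*g) : A) := (Units.inv_mul _).symm
      _ = (((χ (h*g))⁻¹ : Aˣ) : A) * ((χ h : A) * h • ((χ g : A))) := by rw [← h2]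
      _ = (χ h : A) * (((χ (h*g))⁻¹ : Aˣ) : A) * h • ((χ g : A)) := by ring
  have hex : ∃ a : A, (∑ g : G, (((χ g)⁻¹ : Aˣ) : A) * (g • a)) ≠ 0 := by
    by_contra hcon
    push_neg at hcon
    have h0 : (∑ g : G, (algebraMap A K (((χ g)⁻¹ : Aˣ) : A)) • (ψ g : A → K)) = 0 := by
      funext a
      have := congrArg (algebraMap A K) (hcon a)
      rw [map_sum, map_zero] at this
      simpa [Finset.sum_apply, hψ, Algebra.smul_def, map_mul] using this
    have := Fintype.linearIndependent_iff.mp li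
      (fun g => algebraMap A K (((χ g)⁻¹ : Aˣ) : A)) h0 1
    exact (hKinj.ne (Units.ne_zero ((χ 1)⁻¹))) (by simpa using this)
  obtain ⟨a, hane⟩ := hex
  refine ⟨∑ g : G, (((χ g)⁻¹ : Aˣ) : A) * (g • a), hane, ?_⟩
  intro h
  rw [Finset.smul_sum]
  have : ∀ g : G, h • ((((χ g)⁻¹ : Aˣ) : A) * (g • a))
      = (χ h : A) * ((((χ (h * g))⁻¹ : Aˣ) : A) * ((h * g) • a)) := by
    intro g
    rw [smul_mul', hinv h g, smul_smul]
    ring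
  rw [Finset.sum_congr rfl (fun g _ => this g), ← Finset.mul_sum]
  congr 1
  exact Fintype.sum_equiv (Equiv.mulLeft h) _ _ (fun g => rfl)

/-- The gcd of the semi-invariants is itself a semi-invariant for some cocycle. -/
theorem exists_eigencocycle [IsDomain A] {χ : G → Aˣ} {d : A}
    (hd : IsGCDOf d (semiInv G χ)) (hd0 : d ≠ 0) :
    ∃ μ : G → Aˣ, IsCocycle G μ ∧ d ∈ semiInv G μ := by
  classical
  have key : ∀ g : G, ∃ u : Aˣ, g • d = ((χ g : A) * u) * d := by
    intro g
    have h1 : g • d ∣ (χ g : A) * d := by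
      have hcd : ∀ x ∈ semiInv G χ, (((χ g)⁻¹ : Aˣ) : A) * (g • d) ∣ x := by
        intro x hx
        obtain ⟨k, hk⟩ := smul_dvd' g (hd.1 x hx)
        rw [hx g] at hk
        refine ⟨k, ?_⟩
        calc x = (((χ g)⁻¹ : Aˣ) : A) * ((χ g : A) * x) := by
                rw [← mul_assoc, Units.inv_mul, one_mul]
          _ = (((χ g)⁻¹ : Aˣ) : A) * (g • d * k) := by rw [hk]
          _ = (((χ g)⁻¹ : Aˣ) : A) * (g • d) * k := by ring
      obtain ⟨k, hk⟩ := hd.2 _ hcd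
      refine ⟨k, ?_⟩
      calc (χ g : A) * d = (χ g : A) * ((((χ g)⁻¹ : Aˣ) : A) * (g • d) * k) := by rw [← hk]
        _ = ((χ g : A) * (((χ g)⁻¹ : Aˣ) : A)) * (g • d) * k := by ring
        _ = g • d * k := by rw [Units.mul_inv, one_mul]
    have h2 : (χ g : A) * d ∣ g • d := by
      have hcd : ∀ x ∈ semiInv G χ, g⁻¹ • ((χ g : A) * d) ∣ x := by
        intro x hx
        have hdd : (χ g : A) * d ∣ g • x := by
          rw [hx g]
          exact mul_dvd_mul_left _ (hd.1 x hx)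
        have h3 := smul_dvd' g⁻¹ hdd
        rwa [smul_smul, inv_mul_cancel, one_smul] at h3
      have h4 := smul_dvd' g (hd.2 _ hcd)
      rwa [smul_smul, mul_inv_cancel, one_smul] at h4
    obtain ⟨u, hu⟩ := (associated_of_dvd_dvd h2 h1)
    exact ⟨u, by rw [← hu]; ring⟩
  choose u hu using key
  refine ⟨fun g => χ g * u g, ?_, ?_⟩
  · intro g h
    have h1 : (g * h) • d = ((χ (g*h) : A) * (u (g*h) : A)) * d := hu (g*h)
    have h2 : (g * h) • d = (g • ((χ h : A) * (u h : A))) * (((χ g : A) * (u g : A)) * d) := by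
      rw [← smul_smul, hu h]
      rw [smul_mul', hu g]
    have h3 : ((χ (g*h) : A) * (u (g*h) : A))
        = (g • ((χ h : A) * (u h : A))) * ((χ g : A) * (u g : A)) := by
      apply mul_right_cancel₀ hd0
      rw [← h1, h2]; ring
    rw [Units.val_mul, Units.val_mul, Units.val_mul]
    rw [smul_mul'] at h3 ⊢
    calc ((χ (g*h) :A) * (u (g*h) : A)) = _ := h3
      _ = (χ g : A) * (u g : A) * (g • (χ h : A) * g • (u h : A)) := by ring
  · intro g
    rw [hu g, Units.val_mul]

/-- Any two semi-invariants for the same cocycle are linearly dependent over the invariants. -/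
theorem pair_dependent [IsDomain A] [Finite G] {χ : G → Aˣ} {x y : A}
    (hx : x ∈ semiInv G χ) (hy : y ∈ semiInv G χ) (hy0 : y ≠ 0) :
    ∃ s t : A, (∀ g : G, g • s = s) ∧ (∀ g : G, g • t = t) ∧ s ≠ 0 ∧ s * x = t * y := by
  classical
  haveI := Fintype.ofFinite G
  set P : A := ∏ g ∈ Finset.univ.erase (1 : G), g • y with hP
  set N : A := ∏ g : G, g • y with hN
  have hNP : N = y * P := by
    rw [hN, ← Finset.mul_prod_erase Finset.univ _ (Finset.mem_univ (1 : G)), one_smul, hP]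
  have hsm : ∀ (h : G) (s : Finset G) , h • (∏ g ∈ s, g • y) = ∏ g ∈ s, h • (g • y) :=
    fun h s => map_prod (MulSemiringAction.toRingHom G A h) _ s
  have hNinv : ∀ h : G, h • N = N := by
    intro h
    rw [hN, hsm h]
    have : ∀ g : G, h • (g • y) = (h * g) • y := fun g => (smul_smul h g y)
    rw [Finset.prod_congr rfl (fun g _ => this g)]
    exact Fintype.prod_equiv (Equiv.mulLeft h) _ _ (fun g => rfl)
  have hN0 : N ≠ 0 := by
    rw [hN]
    apply Finset.prod_ne_zero_iff.mpr
    intro g _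
    intro h0
    exact hy0 (by simpa using congrArg (g⁻¹ • ·) h0 : y = 0)
  have hPface : ∀ h : G, (χ h : A) * (h • P) = P := by
    intro h
    apply mul_left_cancel₀ hy0
    have h1 : h • N = (χ h : A) * y * (h • P) := by
      rw [hNP, smul_mul', hy h]
    have h2 : h • N = y * P := by rw [hNinv h, hNP]
    calc y * ((χ h : A) * h • P) = (χ h : A) * y * (h • P) := by ring
      _ = h • N := h1.symm
      _ = y * P := h2
  refine ⟨N, x * P, hNinv, ?_, hN0, by rw [hNP]; ring⟩
  intro h
  rw [smul_mul', hx h]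
  calc (χ h : A) * x * (h • P) = x * ((χ h : A) * (h • P)) := by ring
    _ = x * P := by rw [hPface h]

end Act

end Aux

/-- **Statement 8.**  Let `A` be a factorial domain and `G ⊆ Aut(A)` finite with `R = A^G`.
For every cocycle `χ ∈ Z¹(G, U(A))`:
(i) `overline{A_χ A} = d_χ A` where `d_χ = gcd(A_χ)` is a semi-invariant with eigen-cocycle
`μ_χ ∈ Z¹(G, U(A))`, whose class `[μ_χ] ∈ H¹(G,U(A))` is uniquely determined;
(ii) the divisor class of the reflexive rank-one `R`-module `A_χ` equals `[χ⁻¹·μ_χ] ∈ H̃`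
under the isomorphism `C_R ≅ H̃` (explicitly: for any nonzero `a ∈ A_{χ⁻¹}` the divisorial
ideal `a·A_χ` of `R` satisfies `overline{a A_χ A} = (a·d_χ)A` with `a·d_χ` a semi-invariant
with eigen-cocycle `χ⁻¹·μ_χ`);
(iii) `A_χ` is a free `R`-module iff `[χ] = [μ_χ]` in `H¹(G, U(A))`. -/
theorem gcd_semiInv_eigencocycle {A : Type*} [CommRing A] [IsDomain A]
    [UniqueFactorizationMonoid A]
    (G : Type*) [Group G] [Finite G] [MulSemiringAction G A] [FaithfulSMul G A]
    (χ : G → Aˣ) (hχ : IsCocycle G χ) :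
    (∃ d : A, IsGCDOf d (semiInv G χ) ∧
      divClosure (Ideal.span (semiInv G χ)) = Ideal.span {d} ∧
      ∃ μ : G → Aˣ, IsCocycle G μ ∧ d ∈ semiInv G μ) ∧
    (∀ d d' : A, ∀ μ μ' : G → Aˣ, IsGCDOf d (semiInv G χ) → IsGCDOf d' (semiInv G χ) →
      IsCocycle G μ → IsCocycle G μ' → d ∈ semiInv G μ → d' ∈ semiInv G μ' →
      Cohomologous G μ μ') ∧
    (∀ d : A, ∀ μ : G → Aˣ, IsGCDOf d (semiInv G χ) → IsCocycle G μ → d ∈ semiInv G μ →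
      (∀ a : A, a ≠ 0 → a ∈ semiInv G (fun g => (χ g)⁻¹) →
        divClosure (Ideal.span ((a * ·) '' semiInv G χ)) = Ideal.span {a * d} ∧
        a * d ∈ semiInv G (fun g => (χ g)⁻¹ * μ g)) ∧
      (Module.Free ↥(fixedSubring (A := A) G) ↥(semiInvModule G χ) ↔
        Cohomologous G χ μ)) := by
  classical
  obtain ⟨b, hb0, hbχ⟩ := exists_nonzero_semiInv χ hχ
  have hdne : ∀ d : A, IsGCDOf d (semiInv G χ) → d ≠ 0 := by
    intro d hd h
    exact hb0 (zero_dvd_iff.mp (h ▸ hd.1 b hbχ))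
  refine ⟨?_, ?_, ?_⟩
  · obtain ⟨d, hd⟩ := exists_isGCDOf (semiInv G χ)
    obtain ⟨μ, hμ, hdμ⟩ := exists_eigencocycle hd (hdne d hd)
    exact ⟨d, hd, divClosure_eq_of_isGCDOf' hd, μ, hμ, hdμ⟩
  · intro d d' μ μ' hd hd' hμ hμ' hdμ hd'μ'
    have hd0 : d ≠ 0 := hdne d hd
    obtain ⟨v, hv⟩ := associated_of_dvd_dvd (hd'.2 d hd.1) (hd.2 d' hd'.1)
    -- hv : d * ↑v = d'
    refine ⟨v, fun g => ?_⟩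
    have hv1 : ((v⁻¹ : Aˣ) : A) * ((v : Aˣ) : A) = 1 := Units.inv_mul v
    apply mul_right_cancel₀ (mul_ne_zero hd0 (Units.ne_zero v))
    have e2 : g • d' = (μ g : A) * d * (g • ((v : Aˣ) : A)) := by
      rw [← hv, smul_mul', hdμ g]
    calc (μ' g : A) * (d * ((v : Aˣ) : A)) = (μ' g : A) * d' := by rw [hv]
      _ = g • d' := (hd'μ' g).symm
      _ = (μ g : A) * d * (g • ((v : Aˣ) : A)) := e2
      _ = (μ g : A) * (((v⁻¹ : Aˣ) : A) * g • ((v : Aˣ) : A)) * (d * ((v : Aˣ) : A)) := by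
          have h5 : (μ g : A) * (((v⁻¹ : Aˣ) : A) * g • ((v : Aˣ) : A)) * (d * ((v : Aˣ) : A))
              = (μ g : A) * d * (g • ((v : Aˣ) : A)) * (((v⁻¹ : Aˣ) : A) * ((v : Aˣ) : A)) := by
            ring
          rw [h5, hv1, mul_one]
  · intro d μ hd hμc hdμ
    have hd0 : d ≠ 0 := hdne d hd
    constructor
    · intro a ha0 ha
      refine ⟨divClosure_eq_of_isGCDOf' (isGCDOf_mul_left hd a ha0), fun g => ?_⟩
      rw [smul_mul', ha g, hdμ g, Units.val_mul]
      ring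
    · haveI : Nontrivial ↥(fixedSubring (A := A) G) :=
        ⟨⟨0, 1, fun h => zero_ne_one (congrArg Subtype.val h)⟩⟩
      constructor
      · -- free → cohomologous
        intro hfree
        haveI : Nontrivial ↥(semiInvModule G χ) :=
          ⟨⟨⟨b, hbχ⟩, 0, fun h => hb0 (congrArg Subtype.val h)⟩⟩
        let bs := Module.Free.chooseBasis ↥(fixedSubring (A := A) G) ↥(semiInvModule G χ)
        obtain ⟨i⟩ := bs.index_nonempty
        haveI hsub : Subsingleton
            (Module.Free.ChooseBasisIndex ↥(fixedSubring (A := A) G) ↥(semiInvModule G χ)) := by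
          constructor
          intro j k
          by_contra hjk
          have hbk0 : ((bs k : ↥(semiInvModule G χ)) : A) ≠ 0 :=
            fun h => bs.ne_zero k (Subtype.ext h)
          obtain ⟨s, t, hs, ht, hs0, hrel⟩ := pair_dependent (bs j).2 (bs k).2 hbk0
          have heq : ((⟨s, hs⟩ : ↥(fixedSubring (A := A) G)) • bs j)
              = ((⟨t, ht⟩ : ↥(fixedSubring (A := A) G)) • bs k) := Subtype.ext hrel
          have h2 := congrArg (fun z => (bs.repr z) j) heq
          simp only [map_smul, Module.Basis.repr_self, Finsupp.smul_single, smul_eq_mul, mul_one,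
            Finsupp.single_apply, if_pos rfl, if_neg (Ne.symm hjk)] at h2
          exact hs0 (congrArg Subtype.val h2)
        have heχ : ((bs i : ↥(semiInvModule G χ)) : A) ∈ semiInv G χ := (bs i).2
        have hed : ∀ x ∈ semiInv G χ, ((bs i : ↥(semiInvModule G χ)) : A) ∣ x := by
          intro x hx
          have hmem : (⟨x, hx⟩ : ↥(semiInvModule G χ)) ∈
              Submodule.span ↥(fixedSubring (A := A) G) (Set.range ⇑bs) := by
            rw [bs.span_eq]; exact Submodule.mem_top
          have hrange : Set.range ⇑bs = {bs i} := by
            apply Set.eq_singleton_iff_unique_mem.mpr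
            exact ⟨⟨i, rfl⟩, by rintro z ⟨j, rfl⟩; rw [Subsingleton.elim j i]⟩
          rw [hrange] at hmem
          obtain ⟨r, hr⟩ := Submodule.mem_span_singleton.mp hmem
          refine ⟨(r : A), ?_⟩
          have hval : (r : A) * ((bs i : ↥(semiInvModule G χ)) : A) = x :=
            congrArg Subtype.val hr
          rw [← hval]
          exact (mul_comm _ _)
        obtain ⟨w, hw⟩ := associated_of_dvd_dvd (hd.1 _ heχ) (hd.2 _ hed)
        -- hw : d * ↑w = ↑(bs i)
        refine ⟨w⁻¹, fun g => ?_⟩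
        rw [inv_inv]
        have k2 : (g • ((w⁻¹ : Aˣ) : A)) * (g • ((w : Aˣ) : A)) = 1 := by
          rw [← smul_mul', Units.inv_mul, smul_one]
        have hgw0 : (g • ((w : Aˣ) : A)) ≠ 0 := right_ne_zero_of_mul_eq_one k2
        have main : (μ g : A) * (g • ((w : Aˣ) : A)) = (χ g : A) * ((w : Aˣ) : A) := by
          apply mul_left_cancel₀ hd0
          have h1 : g • (d * ((w : Aˣ) : A)) = (μ g : A) * d * (g • ((w : Aˣ) : A)) := by
            rw [smul_mul', hdμ g]
          have h2 : g • (d * ((w : Aˣ) : A)) = (χ g : A) * (d * ((w : Aˣ) : A)) := by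
            rw [hw]; exact heχ g
          calc d * ((μ g : A) * g • ((w : Aˣ) : A))
              = (μ g : A) * d * (g • ((w : Aˣ) : A)) := by ring
            _ = (χ g : A) * (d * ((w : Aˣ) : A)) := by rw [← h1, h2]
            _ = d * ((χ g : A) * ((w : Aˣ) : A)) := by ring
        apply mul_right_cancel₀ hgw0
        calc (μ g : A) * (g • ((w : Aˣ) : A)) = (χ g : A) * ((w : Aˣ) : A) := main
          _ = (χ g : A) * (((w : Aˣ) : A) * g • ((w⁻¹ : Aˣ) : A)) * (g • ((w : Aˣ) : A)) := by
            have h5 : (χ g : A) * (((w : Aˣ) : A) * g • ((w⁻¹ : Aˣ) : A)) * (g • ((w : Aˣ) : A))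
                = (χ g : A) * ((w : Aˣ) : A)
                  * ((g • ((w⁻¹ : Aˣ) : A)) * (g • ((w : Aˣ) : A))) := by ring
            rw [h5, k2, mul_one]
      · -- cohomologous → free
        rintro ⟨u, hu⟩
        have k2 : ∀ g : G, (g • ((u⁻¹ : Aˣ) : A)) * (g • ((u : Aˣ) : A)) = 1 := by
          intro g; rw [← smul_mul', Units.inv_mul, smul_one]
        set e : A := ((u⁻¹ : Aˣ) : A) * d with he
        have heχ : e ∈ semiInv G χ := by
          intro g
          rw [he, smul_mul', hdμ g, hu g]
          have h5 : (g • ((u⁻¹ : Aˣ) : A))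
                * ((χ g : A) * (((u⁻¹ : Aˣ) : A) * g • ((u : Aˣ) : A)) * d)
              = (χ g : A) * (((u⁻¹ : Aˣ) : A) * d)
                * ((g • ((u⁻¹ : Aˣ) : A)) * (g • ((u : Aˣ) : A))) := by ring
          rw [h5, k2 g, mul_one]
        have he0 : e ≠ 0 := mul_ne_zero (Units.ne_zero u⁻¹) hd0
        set m : ↥(semiInvModule G χ) := ⟨e, heχ⟩ with hm
        have hφ : Function.Bijective
            (LinearMap.toSpanSingleton ↥(fixedSubring (A := A) G) ↥(semiInvModule G χ) m) := by
          constructor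
          · intro r r' hrr'
            rw [LinearMap.toSpanSingleton_apply, LinearMap.toSpanSingleton_apply] at hrr'
            have hvals : (r : A) * e = (r' : A) * e := congrArg Subtype.val hrr'
            exact Subtype.ext (mul_right_cancel₀ he0 hvals)
          · intro x
            obtain ⟨q0, hq0⟩ := hd.1 (x : A) x.2
            set q : A := ((u : Aˣ) : A) * q0 with hq
            have hxq : (x : A) = e * q := by
              rw [he, hq0, hq]
              calc d * q0 = ((((u⁻¹ : Aˣ) : A)) * ((u : Aˣ) : A)) * (d * q0) := by
                    rw [Units.inv_mul, one_mul]
                _ = ((u⁻¹ : Aˣ) : A) * d * (((u : Aˣ) : A) * q0) := by ring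
            have hqinv : ∀ g : G, g • q = q := by
              intro g
              have hce : (χ g : A) * e ≠ 0 := mul_ne_zero (Units.ne_zero _) he0
              apply mul_left_cancel₀ hce
              have h1 : g • ((x : A)) = (χ g : A) * (x : A) := x.2 g
              rw [hxq, smul_mul', heχ g] at h1
              rw [h1]
              ring
            refine ⟨⟨q, hqinv⟩, ?_⟩
            rw [LinearMap.toSpanSingleton_apply]
            apply Subtype.ext
            show q * e = (x : A)
            rw [hxq]; ring
        exact Module.Free.of_equiv (LinearEquiv.ofBijective _ hφ)


end QGor
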